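/- Let (V, J, R) be an algebraic Kähler model of real dimension 2m with m ≥ 3. Suppose R satisfies the antisymmetry property ⟨R(X,JX)Y,JX⟩ = −⟨R(Y,JY)X,JY⟩ for all vectors X, Y ∈ V such that X, JX, Y, JY are orthonormal. Then the holomorphic sectional curvature function h(X) = ⟨R(X,JX)JX,X⟩ is constant on the set of unit vectors of V. -/

import Mathlib

open RealInnerProductSpace Module

/-- An algebraic curvature tensor on a real inner product space `V`. -/
structure CurvatureTensor (V : Type*) [NormedAddCommGroup V] [InnerProductSpace ℝ V] where
  R : V → V → V → V
  lin₁ : ∀ Y Z, IsLinearMap ℝ fun X => R X Y Z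
  lin₂ : ∀ X Z, IsLinearMap ℝ fun Y => R X Y Z
  lin₃ : ∀ X Y, IsLinearMap ℝ fun Z => R X Y Z
  antisymm₁ : ∀ X Y Z W, ⟪R X Y Z, W⟫ = -⟪R Y X Z, W⟫
  antisymm₂ : ∀ X Y Z W, ⟪R X Y Z, W⟫ = -⟪R X Y W, Z⟫
  pair_symm : ∀ X Y Z W, ⟪R X Y Z, W⟫ = ⟪R Z W X, Y⟫
  bianchi : ∀ X Y Z, R X Y Z + R Y Z X + R Z X Y = 0

/-- An algebraic Kähler model: an algebraic curvature tensor together with a compatible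
orthogonal complex structure `J`. -/
structure KahlerModel (V : Type*) [NormedAddCommGroup V] [InnerProductSpace ℝ V]
    extends CurvatureTensor V where
  J : V →ₗ[ℝ] V
  J_isometry : ∀ X Y, ⟪J X, J Y⟫ = ⟪X, Y⟫
  J_sq : ∀ X, J (J X) = -X
  R_J_invariant : ∀ X Y Z, R (J X) (J Y) Z = R X Y Z
  R_J_commute : ∀ X Y Z, R X Y (J Z) = J (R X Y Z)

namespace KahlerModel

variable {V : Type*} [NormedAddCommGroup V] [InnerProductSpace ℝ V] (T : KahlerModel V)

lemma R_add₁ (x y z w : V) : T.R (x + y) z w = T.R x z w + T.R y z w :=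
  (T.lin₁ z w).map_add x y

lemma R_add₂ (x y z w : V) : T.R x (y + z) w = T.R x y w + T.R x z w :=
  (T.lin₂ x w).map_add y z

lemma R_add₃ (x y z w : V) : T.R x y (z + w) = T.R x y z + T.R x y w :=
  (T.lin₃ x y).map_add z w

lemma R_smul₁ (a : ℝ) (x z w : V) : T.R (a • x) z w = a • T.R x z w :=
  (T.lin₁ z w).map_smul a x

lemma R_smul₂ (a : ℝ) (x y w : V) : T.R x (a • y) w = a • T.R x y w :=
  (T.lin₂ x w).map_smul a y

lemma R_smul₃ (a : ℝ) (x y z : V) : T.R x y (a • z) = a • T.R x y z :=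
  (T.lin₃ x y).map_smul a z

lemma inner_J_left (x y : V) : ⟪T.J x, y⟫ = -⟪x, T.J y⟫ := by
  have h := T.J_isometry x (T.J y)
  rw [T.J_sq, inner_neg_right] at h
  linarith

lemma inner_J_self (x : V) : ⟪x, T.J x⟫ = 0 := by
  have h := T.inner_J_left x x
  rw [real_inner_comm x (T.J x)] at h
  linarith

lemma R_swap (x y z : V) : T.R x y z = -T.R y x z := by
  apply ext_inner_right ℝ
  intro w
  rw [T.antisymm₁, inner_neg_left]

lemma R_J_swap (x y z : V) : T.R x (T.J y) z = T.R y (T.J x) z := by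
  have h := T.R_J_invariant x (T.J y) z
  rw [T.J_sq] at h
  have h2 : T.R (T.J x) (-y) z = -T.R (T.J x) y z := by
    rw [show (-y : V) = (-1 : ℝ) • y by simp, T.R_smul₂]; simp
  rw [h2] at h
  rw [← h, T.R_swap (T.J x) y z, neg_neg]

end KahlerModel

namespace KahlerModel
variable {V : Type*} [NormedAddCommGroup V] [InnerProductSpace ℝ V] (T : KahlerModel V)

lemma idL (x y : V) : ⟪T.R x (T.J y) x, T.J y⟫ = ⟪T.R x (T.J y) y, T.J x⟫ := by
  rw [T.antisymm₂ x (T.J y) x (T.J y), T.R_J_commute, T.inner_J_left, neg_neg]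

lemma idB (x y : V) : ⟪T.R x (T.J y) x, T.J y⟫ = ⟪T.R y (T.J x) y, T.J x⟫ := by
  rw [T.idL x y, T.R_J_swap]

lemma idC (x y : V) : ⟪T.R x (T.J y) y, T.J x⟫ = ⟪T.R y (T.J x) x, T.J y⟫ := by
  rw [← T.idL x y, T.idB x y, T.idL y x]

lemma orthoquad (x y : V) (hxx : ⟪x, x⟫ = 1) (hyy : ⟪y, y⟫ = 1)
    (hxy : ⟪x, y⟫ = 0) (hxJy : ⟪x, T.J y⟫ = 0) :
    Orthonormal ℝ ![x, T.J x, y, T.J y] := by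
  have hJxy : ⟪T.J x, y⟫ = 0 := by rw [T.inner_J_left, hxJy, neg_zero]
  have hyx : ⟪y, x⟫ = 0 := by rw [real_inner_comm]; exact hxy
  have hJyx : ⟪T.J y, x⟫ = 0 := by rw [real_inner_comm]; exact hxJy
  have hyJx : ⟪y, T.J x⟫ = 0 := by rw [real_inner_comm]; exact hJxy
  have hJxx : ⟪T.J x, x⟫ = 0 := by rw [real_inner_comm]; exact T.inner_J_self x
  have hJyy : ⟪T.J y, y⟫ = 0 := by rw [real_inner_comm]; exact T.inner_J_self y
  have nx : ‖x‖ = 1 := by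
    have := real_inner_self_eq_norm_sq x; nlinarith [norm_nonneg x]
  have ny : ‖y‖ = 1 := by
    have := real_inner_self_eq_norm_sq y; nlinarith [norm_nonneg y]
  have nJx : ‖T.J x‖ = 1 := by
    have := real_inner_self_eq_norm_sq (T.J x); rw [T.J_isometry] at this
    nlinarith [norm_nonneg (T.J x)]
  have nJy : ‖T.J y‖ = 1 := by
    have := real_inner_self_eq_norm_sq (T.J y); rw [T.J_isometry] at this
    nlinarith [norm_nonneg (T.J y)]
  rw [orthonormal_iff_ite]
  intro i j
  fin_cases i <;> fin_cases j <;>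
    simp [T.J_isometry, T.inner_J_self, hxx, hyy, hxy, hxJy, hJxy, hyx, hJyx, hyJx,
      hJxx, hJyy, nx, ny, nJx, nJy]

end KahlerModel

namespace KahlerModel
variable {V : Type*} [NormedAddCommGroup V] [InnerProductSpace ℝ V] (T : KahlerModel V)

lemma key
    (hanti : ∀ X Y : V, Orthonormal ℝ ![X, T.J X, Y, T.J Y] →
      ⟪T.R X (T.J X) Y, T.J X⟫ = -⟪T.R Y (T.J Y) X, T.J Y⟫)
    (X Y : V) (horth : Orthonormal ℝ ![X, T.J X, Y, T.J Y]) :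
    ⟪T.R X (T.J X) (T.J X), X⟫ = ⟪T.R Y (T.J Y) (T.J Y), Y⟫ := by
  have h := orthonormal_iff_ite.mp horth
  have hXX : ⟪X, X⟫ = 1 := by simpa using h 0 0
  have hYY : ⟪Y, Y⟫ = 1 := by simpa using h 2 2
  have hXY : ⟪X, Y⟫ = 0 := by simpa using h 0 2
  have hXJY : ⟪X, T.J Y⟫ = 0 := by simpa using h 0 3
  have hJXY : ⟪T.J X, Y⟫ = 0 := by simpa using h 1 2
  have hYX : ⟪Y, X⟫ = 0 := by rw [real_inner_comm]; exact hXY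
  have hYJX : ⟪Y, T.J X⟫ = 0 := by rw [real_inner_comm]; exact hJXY
  have hXJX : ⟪X, T.J X⟫ = 0 := T.inner_J_self X
  have hYJY : ⟪Y, T.J Y⟫ = 0 := T.inner_J_self Y
  set Z : V := (3/5 : ℝ) • X + (4/5 : ℝ) • Y with hZdef
  set W : V := (-(4/5) : ℝ) • X + (3/5 : ℝ) • Y with hWdef
  have hZW : Orthonormal ℝ ![Z, T.J Z, W, T.J W] := by
    apply T.orthoquad <;>
    · simp only [hZdef, hWdef, inner_add_left, inner_add_right, real_inner_smul_left,
        real_inner_smul_right, map_add, map_smul, hXX, hYY, hXY, hYX, hXJX, hYJY,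
        hXJY, hYJX]
      norm_num
  have E1 := hanti Z W hZW
  have E0 := hanti X Y horth
  have A := T.pair_symm X (T.J X) Y (T.J Y)
  have B := T.idB X Y
  have C := T.idC X Y
  have cX : ⟪T.R X (T.J X) (T.J X), X⟫ = -⟪T.R X (T.J X) X, T.J X⟫ :=
    T.antisymm₂ _ _ _ _
  have cY : ⟪T.R Y (T.J Y) (T.J Y), Y⟫ = -⟪T.R Y (T.J Y) Y, T.J Y⟫ :=
    T.antisymm₂ _ _ _ _
  simp only [hZdef, hWdef, map_add, map_smul, T.R_add₁, T.R_add₂, T.R_add₃,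
    T.R_smul₁, T.R_smul₂, T.R_smul₃, inner_add_left, inner_add_right,
    real_inner_smul_left, real_inner_smul_right] at E1
  ring_nf at E1
  linarith [E0, E1, A, B, C, cX, cY]

end KahlerModel

theorem constant_holomorphic_of_antisymmetry {V : Type*} [NormedAddCommGroup V] [InnerProductSpace ℝ V] [FiniteDimensional ℝ V]
    (T : KahlerModel V) (m : ℕ) (hm : 3 ≤ m) (hdim : finrank ℝ V = 2 * m)
    (hanti : ∀ X Y : V, Orthonormal ℝ ![X, T.J X, Y, T.J Y] →
      ⟪T.R X (T.J X) Y, T.J X⟫ = -⟪T.R Y (T.J Y) X, T.J Y⟫) :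
    ∀ X Y : V, ‖X‖ = 1 → ‖Y‖ = 1 →
      ⟪T.R X (T.J X) (T.J X), X⟫ = ⟪T.R Y (T.J Y) (T.J Y), Y⟫ := by
  intro X Y hX hY
  classical
  set v : Fin 4 → V := ![X, T.J X, Y, T.J Y] with hv
  set K : Submodule ℝ V := Submodule.span ℝ (Set.range v) with hK
  have hfr : finrank ℝ K ≤ 4 := by
    simpa [Set.finrank] using finrank_range_le_card (R := ℝ) v
  have hpos : 0 < finrank ℝ Kᗮ := by
    have hsum := K.finrank_add_finrank_orthogonal
    rw [hdim] at hsum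
    omega
  obtain ⟨z, hz⟩ := Module.finrank_pos_iff_exists_ne_zero.mp hpos
  have hz0 : (z : V) ≠ 0 := by
    simpa using hz
  set u : V := ‖(z : V)‖⁻¹ • (z : V) with hu
  have hnu : ‖u‖ = 1 := norm_smul_inv_norm hz0
  have huK : u ∈ Kᗮ := Kᗮ.smul_mem _ z.2
  have horthf : ∀ w ∈ K, ⟪w, u⟫ = 0 := (Submodule.mem_orthogonal K u).mp huK
  have hXu : ⟪X, u⟫ = 0 := horthf X (Submodule.subset_span ⟨0, rfl⟩)
  have hJXu : ⟪T.J X, u⟫ = 0 := horthf _ (Submodule.subset_span ⟨1, rfl⟩)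
  have hYu : ⟪Y, u⟫ = 0 := horthf Y (Submodule.subset_span ⟨2, rfl⟩)
  have hJYu : ⟪T.J Y, u⟫ = 0 := horthf _ (Submodule.subset_span ⟨3, rfl⟩)
  have hXJu : ⟪X, T.J u⟫ = 0 := by
    have h1 := T.inner_J_left X u
    rw [hJXu] at h1
    linarith
  have hYJu : ⟪Y, T.J u⟫ = 0 := by
    have h1 := T.inner_J_left Y u
    rw [hJYu] at h1
    linarith
  have hXX : ⟪X, X⟫ = 1 := by
    rw [real_inner_self_eq_norm_mul_norm, hX]; norm_num
  have hYY : ⟪Y, Y⟫ = 1 := by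
    rw [real_inner_self_eq_norm_mul_norm, hY]; norm_num
  have huu : ⟪u, u⟫ = 1 := by
    rw [real_inner_self_eq_norm_mul_norm, hnu]; norm_num
  have o1 : Orthonormal ℝ ![X, T.J X, u, T.J u] := T.orthoquad X u hXX huu hXu hXJu
  have o2 : Orthonormal ℝ ![Y, T.J Y, u, T.J u] := T.orthoquad Y u hYY huu hYu hYJu
  exact (T.key hanti X u o1).trans (T.key hanti Y u o2).symm
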